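/- arXiv:2311.14002 — 3 statements merged into one kernel-verified Lean document; each statement's English description precedes it below -/
import Mathlib

section
/- For every ε > 0 and every real U, the difference between f_ε(U) := |U|^{p-1}U/[ln(e+|U|)]^ε and f_0(U) := |U|^{p-1}U satisfies |f_ε(U) - f_0(U)| ≤ ε |U|^p ln(ln(e+|U|)). -/
open Real

/-- For every `ε > 0` and every real `U`,
`|f_ε(U) - f_0(U)| ≤ ε |U|^p ln(ln(e+|U|))`, where
`f_ε(U) = |U|^{p-1} U / (ln(e+|U|))^ε` and `p > 1`. -/
theorem stmt_0 (p : ℝ) (hp : 1 < p) (ε : ℝ) (hε : 0 < ε) (U : ℝ) :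
    |(|U| ^ (p - 1) * U / (Real.log (Real.exp 1 + |U|)) ^ ε) - |U| ^ (p - 1) * U| ≤
      ε * |U| ^ p * Real.log (Real.log (Real.exp 1 + |U|)) := by
  have hU0 : (0:ℝ) ≤ |U| := abs_nonneg U
  have hepos : (0:ℝ) < Real.exp 1 + |U| := by positivity
  set L := Real.log (Real.exp 1 + |U|) with hLdef
  have hL1 : 1 ≤ L := by
    rw [hLdef]
    calc (1:ℝ) = Real.log (Real.exp 1) := (Real.log_exp 1).symm
    _ ≤ _ := Real.log_le_log (Real.exp_pos 1) (by linarith)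
  have hLpos : 0 < L := lt_of_lt_of_le one_pos hL1
  have hT1 : 1 ≤ L ^ ε := Real.one_le_rpow hL1 hε.le
  have hTpos : 0 < L ^ ε := lt_of_lt_of_le one_pos hT1
  have hlogL : 0 ≤ Real.log L := Real.log_nonneg hL1
  rcases eq_or_ne U 0 with h0 | h0
  · subst h0
    simp only [abs_zero]
    rw [Real.zero_rpow (by linarith : p - 1 ≠ 0), Real.zero_rpow (by linarith : p ≠ 0)]
    simp [hlogL]
  · have habs : 0 < |U| := abs_pos.mpr h0
    -- key inequality: 1 - (L^ε)⁻¹ ≤ ε * log L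
    have hkey : 1 - (L ^ ε)⁻¹ ≤ ε * Real.log L := by
      have h1 : Real.log (L ^ ε)⁻¹ ≤ (L ^ ε)⁻¹ - 1 :=
        Real.log_le_sub_one_of_pos (by positivity)
      rw [Real.log_inv, Real.log_rpow hLpos] at h1
      linarith
    have hAp : |(|U| ^ (p - 1) * U)| = |U| ^ p := by
      rw [abs_mul, abs_of_nonneg (Real.rpow_nonneg hU0 _)]
      nth_rewrite 2 [← Real.rpow_one |U|]
      rw [ ← Real.rpow_add habs] <;> norm_num
    have hrw : |U| ^ (p - 1) * U / L ^ ε - |U| ^ (p - 1) * U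
        = (|U| ^ (p - 1) * U) * ((L ^ ε)⁻¹ - 1) := by
      field_simp
    rw [hrw, abs_mul, hAp]
    have habs2 : |(L ^ ε)⁻¹ - 1| = 1 - (L ^ ε)⁻¹ := by
      rw [abs_sub_comm, abs_of_nonneg]
      have : (L ^ ε)⁻¹ ≤ 1 := by
        rw [inv_le_one_iff₀]; right; exact hT1
      linarith
    rw [habs2]
    calc |U| ^ p * (1 - (L ^ ε)⁻¹) ≤ |U| ^ p * (ε * Real.log L) := by
          apply mul_le_mul_of_nonneg_left hkey (by positivity)
      _ = ε * |U| ^ p * Real.log L := by ring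
end

section
/- For ε sufficiently small and all real U, |f_ε'(U) - f_0'(U)| ≤ ε |U|^{p-1} ( p ln(ln(e+|U|)) + 1/ln(e+|U|) ), where f_0'(U) = p|U|^{p-1}. -/
open Real

lemma logL_ge_one (t : ℝ) : 1 ≤ Real.log (Real.exp 1 + |t|) := by
  have h : Real.exp 1 ≤ Real.exp 1 + |t| := le_add_of_nonneg_right (abs_nonneg t)
  calc (1:ℝ) = Real.log (Real.exp 1) := (Real.log_exp 1).symm
    _ ≤ _ := Real.log_le_log (Real.exp_pos 1) h

lemma hasDeriv_ne (p ε : ℝ) (U : ℝ) (hU : U ≠ 0) :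
    HasDerivAt (fun t : ℝ => |t| ^ (p - 1) * t / (Real.log (Real.exp 1 + |t|)) ^ ε)
      (p * |U| ^ (p - 1) * (Real.log (Real.exp 1 + |U|)) ^ (-ε)
        - ε * |U| ^ (p - 1) * (|U| / (Real.exp 1 + |U|)) *
            (Real.log (Real.exp 1 + |U|)) ^ (-ε - 1)) U := by
  have hL1 : 1 ≤ Real.log (Real.exp 1 + |U|) := logL_ge_one U
  have hL0 : 0 < Real.log (Real.exp 1 + |U|) := lt_of_lt_of_le one_pos hL1
  rcases hU.lt_or_gt with hneg | hpos
  · -- U < 0 : f t = -(-t)^p * (log (e - t))^(-ε) near U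
    have habs : |U| = -U := abs_of_neg hneg
    have heU : (0:ℝ) < Real.exp 1 - U := by
      have := Real.exp_pos 1; linarith
    have h1 : HasDerivAt (fun t : ℝ => -t) (-1) U := (hasDerivAt_id U).neg
    have h2 : HasDerivAt (fun t : ℝ => (-t) ^ p) (-1 * (p * (-U) ^ (p-1))) U := by
      have := (hasDerivAt_rpow_const (p := p) (x := -U) (Or.inl (by linarith))).comp U h1
      simpa [mul_comm, Function.comp_def] using this
    have h2' : HasDerivAt (fun t : ℝ => -((-t) ^ p)) (p * (-U) ^ (p-1)) U := by
      simpa [Pi.neg_def] using h2.neg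
    have h3 : HasDerivAt (fun t : ℝ => Real.exp 1 - t) (-1) U := by
      have := h1.const_add (Real.exp 1); simpa only [← sub_eq_add_neg] using this
    have h4 : HasDerivAt (fun t : ℝ => Real.log (Real.exp 1 - t)) ((Real.exp 1 - U)⁻¹ * -1) U :=
      (Real.hasDerivAt_log heU.ne').comp U h3
    have heq2 : Real.exp 1 - U = Real.exp 1 + |U| := by rw [habs]; ring
    have hLe : Real.log (Real.exp 1 - U) ≠ 0 := by rw [heq2]; exact hL0.ne'
    have h5 : HasDerivAt (fun t : ℝ => (Real.log (Real.exp 1 - t)) ^ (-ε))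
        (((Real.exp 1 - U)⁻¹ * -1) * (-ε) * (Real.log (Real.exp 1 - U)) ^ (-ε - 1)) U :=
      h4.rpow_const (Or.inl hLe)
    have h6 := h2'.mul h5
    have heq : (fun t : ℝ => |t| ^ (p - 1) * t / (Real.log (Real.exp 1 + |t|)) ^ ε)
        =ᶠ[nhds U] (fun t : ℝ => -((-t) ^ p) * (Real.log (Real.exp 1 - t)) ^ (-ε)) := by
      filter_upwards [Iio_mem_nhds hneg] with t ht
      have habt : |t| = -t := abs_of_neg ht
      have hnt : (0:ℝ) < -t := by simp only [Set.mem_Iio] at ht; linarith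
      have het : Real.exp 1 + |t| = Real.exp 1 - t := by rw [habt]; ring
      have hLt : (0:ℝ) < Real.log (Real.exp 1 - t) := by
        rw [← het]; exact lt_of_lt_of_le one_pos (logL_ge_one t)
      rw [het, habt, Real.rpow_neg hLt.le, div_eq_mul_inv]
      have : (-t) ^ p = (-t) ^ (p-1) * (-t) := by
        rw [← Real.rpow_add_one hnt.ne' (p-1)]; ring_nf
      rw [this]; ring
    have h7 := h6.congr_of_eventuallyEq heq
    refine h7.congr_deriv ?_; symm
    rw [← heq2, habs]
    have hUp : (-U) ^ p = (-U) ^ (p-1) * (-U) := by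
      rw [← Real.rpow_add_one (by linarith : (-U) ≠ 0) (p-1)]; ring_nf
    rw [hUp]
    field_simp
    ring
  · -- U > 0
    have habs : |U| = U := abs_of_pos hpos
    have heU : (0:ℝ) < Real.exp 1 + U := by have := Real.exp_pos 1; linarith
    have h1 : HasDerivAt (fun t : ℝ => t ^ p) (p * U ^ (p-1)) U :=
      hasDerivAt_rpow_const (Or.inl hpos.ne')
    have h3 : HasDerivAt (fun t : ℝ => Real.exp 1 + t) 1 U := by
      simpa using (hasDerivAt_id U).const_add (Real.exp 1)
    have h4 : HasDerivAt (fun t : ℝ => Real.log (Real.exp 1 + t)) ((Real.exp 1 + U)⁻¹ * 1) U :=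
      (Real.hasDerivAt_log heU.ne').comp U h3
    have hLe : Real.log (Real.exp 1 + U) ≠ 0 := by rw [← habs]; exact hL0.ne'
    have h5 : HasDerivAt (fun t : ℝ => (Real.log (Real.exp 1 + t)) ^ (-ε))
        (((Real.exp 1 + U)⁻¹ * 1) * (-ε) * (Real.log (Real.exp 1 + U)) ^ (-ε - 1)) U :=
      h4.rpow_const (Or.inl hLe)
    have h6 := h1.mul h5
    have heq : (fun t : ℝ => |t| ^ (p - 1) * t / (Real.log (Real.exp 1 + |t|)) ^ ε)
        =ᶠ[nhds U] (fun t : ℝ => t ^ p * (Real.log (Real.exp 1 + t)) ^ (-ε)) := by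
      filter_upwards [Ioi_mem_nhds hpos] with t ht
      have habt : |t| = t := abs_of_pos ht
      have hLt : (0:ℝ) < Real.log (Real.exp 1 + |t|) :=
        lt_of_lt_of_le one_pos (logL_ge_one t)
      rw [habt] at hLt ⊢
      rw [Real.rpow_neg hLt.le, div_eq_mul_inv]
      have : t ^ p = t ^ (p-1) * t := by
        rw [← Real.rpow_add_one (ne_of_gt ht) (p-1)]; ring_nf
      rw [this]
    have h7 := h6.congr_of_eventuallyEq heq
    refine h7.congr_deriv ?_; symm
    rw [habs]
    have hUp : U ^ p = U ^ (p-1) * U := by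
      rw [← Real.rpow_add_one hpos.ne' (p-1)]; ring_nf
    rw [hUp]
    field_simp
    ring

lemma bound_lemma (p ε a L r : ℝ) (hppos : 0 < p) (hε : 0 ≤ ε) (ha : 0 ≤ a)
    (hL : 1 ≤ L) (hr0 : 0 ≤ r) (hr1 : r ≤ 1) :
    |p * a * L ^ (-ε) - ε * a * r * L ^ (-ε - 1) - p * a| ≤
      ε * a * (p * Real.log L + 1 / L) := by
  have hL0 : 0 < L := lt_of_lt_of_le one_pos hL
  have hlog : 0 ≤ Real.log L := Real.log_nonneg hL
  have h1 : L ^ (-ε) ≤ 1 := Real.rpow_le_one_of_one_le_of_nonpos hL (neg_nonpos.2 hε)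
  have h2 : 1 - ε * Real.log L ≤ L ^ (-ε) := by
    rw [Real.rpow_def_of_pos hL0]
    have := Real.add_one_le_exp (Real.log L * (-ε))
    nlinarith [this]
  have h3 : L ^ (-ε - 1) ≤ 1 / L := by
    rw [one_div, ← Real.rpow_neg_one L]
    exact Real.rpow_le_rpow_of_exponent_le hL (by linarith)
  have h4 : (0:ℝ) ≤ L ^ (-ε - 1) := Real.rpow_nonneg hL0.le _
  have h5 : (0:ℝ) ≤ L ^ (-ε) := Real.rpow_nonneg hL0.le _
  have hinv : (0:ℝ) < 1 / L := by positivity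
  rw [abs_le]
  constructor
  · nlinarith [mul_le_mul hr1 h3 h4 zero_le_one, mul_nonneg (mul_nonneg hε ha) hinv.le,
      mul_le_mul_of_nonneg_left h2 (mul_nonneg hppos.le ha)]
  · nlinarith [mul_le_mul hr1 h3 h4 zero_le_one, mul_nonneg (mul_nonneg hε ha) hr0,
      mul_le_mul_of_nonneg_left h1 (mul_nonneg hppos.le ha),
      mul_nonneg (mul_nonneg (mul_nonneg hε ha) hr0) h4,
      mul_nonneg (mul_nonneg hε ha) hinv.le,
      mul_nonneg (mul_nonneg (mul_nonneg hppos.le ha) hε) hlog]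

/-- For `ε` sufficiently small and all real `U`,
`|f_ε'(U) - f_0'(U)| ≤ ε |U|^{p-1} (p ln ln(e+|U|) + 1/ln(e+|U|))`,
where `f_0'(U) = p |U|^{p-1}` and `p = (n+2)/(n-2)`, `n ≥ 3`. -/
theorem stmt_3 (n : ℕ) (hn : 3 ≤ n) (p : ℝ) (hp : p = ((n : ℝ) + 2) / ((n : ℝ) - 2)) :
    ∃ ε₀ > (0 : ℝ), ∀ ε : ℝ, 0 ≤ ε → ε ≤ ε₀ → ∀ U : ℝ,
      |deriv (fun t : ℝ => |t| ^ (p - 1) * t / (Real.log (Real.exp 1 + |t|)) ^ ε) U -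
          p * |U| ^ (p - 1)| ≤
        ε * |U| ^ (p - 1) *
          (p * Real.log (Real.log (Real.exp 1 + |U|)) + 1 / Real.log (Real.exp 1 + |U|)) := by
  have hn3 : (3:ℝ) ≤ (n:ℝ) := by exact_mod_cast hn
  have hp1 : 1 < p := by
    rw [hp, lt_div_iff₀ (by linarith)]; linarith
  refine ⟨1, one_pos, fun ε hε hε1 U => ?_⟩
  rcases eq_or_ne U 0 with rfl | hU
  · have hz : |(0:ℝ)| ^ (p - 1) = 0 := by
      rw [abs_zero, Real.zero_rpow (by linarith : p - 1 ≠ 0)]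
    have hder : HasDerivAt (fun t : ℝ => |t| ^ (p - 1) * t / (Real.log (Real.exp 1 + |t|)) ^ ε)
        0 0 := by
      rw [hasDerivAt_iff_tendsto_slope]
      have c1 : ContinuousAt (fun t : ℝ => |t| ^ (p - 1)) 0 := by
        have h : ContinuousAt (fun x : ℝ => x ^ (p - 1)) |(0:ℝ)| := by
          simpa using Real.continuousAt_rpow_const 0 (p - 1) (Or.inr (by linarith))
        exact h.comp continuous_abs.continuousAt
      have c2 : ContinuousAt (fun t : ℝ => Real.log (Real.exp 1 + |t|)) 0 := by
        refine ContinuousAt.comp (Real.continuousAt_log ?_)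
          ((continuous_const.add continuous_abs).continuousAt)
        simp [(Real.exp_pos 1).ne']
      have c3 : ContinuousAt (fun t : ℝ => (Real.log (Real.exp 1 + |t|)) ^ ε) 0 :=
        c2.rpow_const (Or.inl (by simp [Real.log_exp]))
      have hcont : ContinuousAt
          (fun t : ℝ => |t| ^ (p - 1) / (Real.log (Real.exp 1 + |t|)) ^ ε) 0 :=
        c1.div c3 (by simp [Real.log_exp])
      have h2 : Filter.Tendsto
          (fun t : ℝ => |t| ^ (p - 1) / (Real.log (Real.exp 1 + |t|)) ^ ε) (nhds 0) (nhds 0) := by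
        simpa [Real.log_exp, Real.one_rpow,
          Real.zero_rpow (show p - 1 ≠ 0 by linarith)] using hcont.tendsto
      refine Filter.Tendsto.congr' ?_ (h2.mono_left nhdsWithin_le_nhds)
      filter_upwards [self_mem_nhdsWithin] with t ht
      have ht0 : t ≠ 0 := ht
      have hLt : (0:ℝ) < (Real.log (Real.exp 1 + |t|)) ^ ε :=
        Real.rpow_pos_of_pos (lt_of_lt_of_le one_pos (logL_ge_one t)) ε
      rw [slope_def_field]
      simp only [abs_zero, Real.zero_rpow (show p - 1 ≠ 0 by linarith), zero_mul, zero_div,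
        sub_zero]
      field_simp
    rw [hder.deriv, hz]
    simp
  · have key := hasDeriv_ne p ε U hU
    rw [key.deriv]
    have hL1 : 1 ≤ Real.log (Real.exp 1 + |U|) := logL_ge_one U
    have heU : (0:ℝ) < Real.exp 1 + |U| := by
      have := Real.exp_pos 1; have := abs_nonneg U; linarith
    have hr1 : |U| / (Real.exp 1 + |U|) ≤ 1 := by
      rw [div_le_one heU]
      have := Real.exp_pos 1; linarith [abs_nonneg U]
    exact bound_lemma p ε (|U| ^ (p-1)) (Real.log (Real.exp 1 + |U|)) (|U| / (Real.exp 1 + |U|))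
      (by linarith) hε (Real.rpow_nonneg (abs_nonneg U) _) hL1 (by positivity) hr1
end

section
/- Let n ≥ 3, ξ₁, ξ₂ ∈ ℝⁿ and λ₂ > 0 with λ₂|ξ₁ − ξ₂| ≤ 1. Set δ₂ = δ_{(ξ₂,λ₂)} and δ̃₂ = δ_{(ξ₁,λ₂)}. Then there is a constant c depending only on n such that |δ₂(x) − δ̃₂(x)| ≤ c λ₂|ξ₁ − ξ₂| δ̃₂(x) for every x ∈ ℝⁿ. -/
open Real

/-- The standard bubble `δ_{(a,λ)}(x) = c₀ λ^{(n-2)/2} / (1 + λ²|x-a|²)^{(n-2)/2}`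
with `c₀ = (n(n-2))^{(n-2)/4}`. -/
noncomputable def bubble (n : ℕ) (a : EuclideanSpace ℝ (Fin n)) (lam : ℝ)
    (x : EuclideanSpace ℝ (Fin n)) : ℝ :=
  ((n : ℝ) * ((n : ℝ) - 2)) ^ (((n : ℝ) - 2) / 4) * lam ^ (((n : ℝ) - 2) / 2) /
    (1 + lam ^ 2 * ‖x - a‖ ^ 2) ^ (((n : ℝ) - 2) / 2)

private lemma key_quad (s1 s2 t : ℝ) (h1 : 0 ≤ s1) (h2 : 0 ≤ s2) (ht : 0 ≤ t)
    (ht1 : t ≤ 1) (hd : s1 ≤ s2 + t) : 1 + s1 ^ 2 ≤ (1 + 2 * t) * (1 + s2 ^ 2) := by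
  have hsq : s1 ^ 2 ≤ (s2 + t) ^ 2 := by nlinarith
  nlinarith [mul_nonneg ht (sq_nonneg (s2 - 1)), mul_le_mul_of_nonneg_left ht1 ht]

private lemma pow_sub_one_le (n : ℕ) (x : ℝ) (h1 : 1 ≤ x) (h3 : x ≤ 3) :
    x ^ n - 1 ≤ n * 3 ^ n * (x - 1) := by
  induction n with
  | zero => simp
  | succ k ih =>
    have hx0 : (0:ℝ) ≤ x := by linarith
    have hp : (1:ℝ) ≤ x ^ k := one_le_pow₀ h1
    have h3p : (1:ℝ) ≤ (3:ℝ) ^ k := one_le_pow₀ (by norm_num)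
    have key : x ^ (k+1) - 1 = x * (x ^ k - 1) + (x - 1) := by ring
    have hb : x * (x ^ k - 1) ≤ 3 * (k * 3 ^ k * (x - 1)) := by
      calc x * (x ^ k - 1) ≤ 3 * (x ^ k - 1) := by nlinarith
        _ ≤ 3 * (k * 3 ^ k * (x - 1)) := by linarith
    have : ((k:ℝ)+1) * 3 ^ (k+1) * (x-1) = 3*((k:ℝ) * 3^k * (x-1)) + 3*3^k*(x-1) := by
      ring
    push_cast
    nlinarith [mul_nonneg (sub_nonneg.mpr h1) (sub_nonneg.mpr h3p)]

private lemma one_sub_pow_le (n : ℕ) (x : ℝ) (h0 : 0 ≤ x) (h1 : x ≤ 1) :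
    1 - x ^ n ≤ n * (1 - x) := by
  induction n with
  | zero => simp
  | succ k ih =>
    have hp : x ^ k ≤ 1 := pow_le_one₀ h0 h1
    have key : 1 - x ^ (k+1) = x * (1 - x ^ k) + (1 - x) := by ring
    push_cast
    nlinarith [mul_le_mul_of_nonneg_left ih h0]

private lemma rpow_ratio (n : ℕ) (q r t : ℝ) (hq0 : 0 < q) (hqn : q ≤ n) (ht : 0 ≤ t)
    (ht1 : t ≤ 1) (hr0 : 0 < r) (hru : r ≤ 1 + 2 * t) (hrl : 1 - r ≤ 2 * t * r) :
    |r ^ q - 1| ≤ 2 * n * 3 ^ n * t := by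
  have h3n : (1:ℝ) ≤ 3 ^ n := one_le_pow₀ (by norm_num)
  rcases le_or_gt 1 r with hr1 | hr1
  · have hge : (1:ℝ) ≤ r ^ q := by
      have := Real.rpow_le_rpow_of_exponent_le hr1 hq0.le
      simpa [Real.rpow_zero] using this
    have hle : r ^ q ≤ r ^ n := by
      have := Real.rpow_le_rpow_of_exponent_le hr1 hqn
      rwa [Real.rpow_natCast] at this
    have hr3 : r ≤ 3 := by linarith
    have hpow := pow_sub_one_le n r hr1 hr3
    rw [abs_of_nonneg (by linarith)]
    have h2t : r - 1 ≤ 2 * t := by linarith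
    have hnn : (0:ℝ) ≤ (n:ℝ) * 3 ^ n := by positivity
    nlinarith [mul_le_mul_of_nonneg_left h2t hnn]
  · have hle1 : r ^ q ≤ 1 := Real.rpow_le_one hr0.le hr1.le hq0.le
    have hge : r ^ n ≤ r ^ q := by
      have := Real.rpow_le_rpow_of_exponent_ge hr0 hr1.le hqn
      rwa [Real.rpow_natCast] at this
    have hpow := one_sub_pow_le n r hr0.le hr1.le
    rw [abs_of_nonpos (by linarith), neg_sub]
    have h1r : 1 - r ≤ 2 * t := by nlinarith
    nlinarith [Nat.cast_nonneg (α := ℝ) n,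
      mul_le_mul_of_nonneg_left h1r (Nat.cast_nonneg (α := ℝ) n),
      mul_le_mul_of_nonneg_right h3n (mul_nonneg (by positivity : (0:ℝ) ≤ 2*(n:ℝ)) ht)]

/-- If `λ₂|ξ₁ - ξ₂| ≤ 1`, then `|δ_{(ξ₂,λ₂)}(x) - δ_{(ξ₁,λ₂)}(x)| ≤ c λ₂|ξ₁-ξ₂| δ_{(ξ₁,λ₂)}(x)`
for a constant `c` depending only on `n`. -/
theorem stmt_11 (n : ℕ) (hn : 3 ≤ n) :
    ∃ c > (0 : ℝ), ∀ (ξ₁ ξ₂ : EuclideanSpace ℝ (Fin n)) (lam₂ : ℝ), 0 < lam₂ →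
      lam₂ * ‖ξ₁ - ξ₂‖ ≤ 1 → ∀ x : EuclideanSpace ℝ (Fin n),
      |bubble n ξ₂ lam₂ x - bubble n ξ₁ lam₂ x| ≤
        c * (lam₂ * ‖ξ₁ - ξ₂‖) * bubble n ξ₁ lam₂ x := by
  have hn3 : (3:ℝ) ≤ (n:ℝ) := by exact_mod_cast hn
  refine ⟨2 * n * 3 ^ n, by positivity, ?_⟩
  intro ξ₁ ξ₂ lam hlam ht1' x
  set t := lam * ‖ξ₁ - ξ₂‖ with htdef
  have ht0 : 0 ≤ t := by positivity
  set q : ℝ := ((n:ℝ) - 2) / 2 with hqdef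
  have hq0 : 0 < q := by rw [hqdef]; linarith
  have hqn : q ≤ (n:ℝ) := by rw [hqdef]; linarith
  set A := 1 + lam ^ 2 * ‖x - ξ₁‖ ^ 2 with hAdef
  set B := 1 + lam ^ 2 * ‖x - ξ₂‖ ^ 2 with hBdef
  have hA : 0 < A := by positivity
  have hB : 0 < B := by positivity
  -- difference of scaled distances
  have hdist : |lam * ‖x - ξ₁‖ - lam * ‖x - ξ₂‖| ≤ t := by
    rw [← mul_sub, abs_mul, abs_of_pos hlam, htdef]
    have h := abs_norm_sub_norm_le (x - ξ₁) (x - ξ₂)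
    have : (x - ξ₁) - (x - ξ₂) = ξ₂ - ξ₁ := by abel
    rw [this] at h
    rw [norm_sub_rev ξ₁ ξ₂]
    exact mul_le_mul_of_nonneg_left h hlam.le
  have hd1 : lam * ‖x - ξ₁‖ ≤ lam * ‖x - ξ₂‖ + t := by
    have := abs_le.mp hdist; linarith [this.2]
  have hd2 : lam * ‖x - ξ₂‖ ≤ lam * ‖x - ξ₁‖ + t := by
    have := abs_le.mp hdist; linarith [this.1]
  have hAB : A ≤ (1 + 2 * t) * B := by
    have := key_quad (lam * ‖x - ξ₁‖) (lam * ‖x - ξ₂‖) t (by positivity) (by positivity)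
      ht0 ht1' hd1
    rw [hAdef, hBdef]
    calc 1 + lam ^ 2 * ‖x - ξ₁‖ ^ 2 = 1 + (lam * ‖x - ξ₁‖) ^ 2 := by ring
      _ ≤ (1 + 2*t) * (1 + (lam * ‖x - ξ₂‖) ^ 2) := this
      _ = (1 + 2*t) * (1 + lam ^ 2 * ‖x - ξ₂‖ ^ 2) := by ring
  have hBA : B ≤ (1 + 2 * t) * A := by
    have := key_quad (lam * ‖x - ξ₂‖) (lam * ‖x - ξ₁‖) t (by positivity) (by positivity)
      ht0 ht1' hd2
    rw [hAdef, hBdef]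
    calc 1 + lam ^ 2 * ‖x - ξ₂‖ ^ 2 = 1 + (lam * ‖x - ξ₂‖) ^ 2 := by ring
      _ ≤ (1 + 2*t) * (1 + (lam * ‖x - ξ₁‖) ^ 2) := this
      _ = (1 + 2*t) * (1 + lam ^ 2 * ‖x - ξ₁‖ ^ 2) := by ring
  set r : ℝ := A / B with hrdef
  have hr0 : 0 < r := div_pos hA hB
  have hru : r ≤ 1 + 2 * t := by
    rw [hrdef, div_le_iff₀ hB]; exact hAB
  have hrl : 1 - r ≤ 2 * t * r := by
    have h1 : 1 ≤ (1 + 2 * t) * r := by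
      rw [hrdef, ← mul_div_assoc, le_div_iff₀ hB, one_mul]; linarith [hBA]
    nlinarith
  have hratio := rpow_ratio n q r t hq0 hqn ht0 ht1' hr0 hru hrl
  -- express bubbles
  set C : ℝ := ((n : ℝ) * ((n : ℝ) - 2)) ^ (((n : ℝ) - 2) / 4) * lam ^ q with hCdef
  have hC : 0 < C := by
    rw [hCdef]
    exact mul_pos (Real.rpow_pos_of_pos (by nlinarith) _) (Real.rpow_pos_of_pos hlam _)
  have hb2 : bubble n ξ₂ lam x = C / B ^ q := by rw [bubble, hCdef, hqdef, hBdef]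
  have hb1 : bubble n ξ₁ lam x = C / A ^ q := by rw [bubble, hCdef, hqdef, hAdef]
  have hAq : 0 < A ^ q := Real.rpow_pos_of_pos hA q
  have hBq : 0 < B ^ q := Real.rpow_pos_of_pos hB q
  have hD : 0 < bubble n ξ₁ lam x := by rw [hb1]; positivity
  have hfact : bubble n ξ₂ lam x - bubble n ξ₁ lam x
      = bubble n ξ₁ lam x * (r ^ q - 1) := by
    rw [hb1, hb2, hrdef, Real.div_rpow hA.le hB.le]
    field_simp
  rw [hfact, abs_mul, abs_of_pos hD, mul_comm (2 * (n:ℝ) * 3 ^ n * t)]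
  calc bubble n ξ₁ lam x * |r ^ q - 1|
      ≤ bubble n ξ₁ lam x * (2 * n * 3 ^ n * t) := by
        exact mul_le_mul_of_nonneg_left hratio hD.le
    _ = bubble n ξ₁ lam x * (2 * n * 3 ^ n * t) := rfl
end
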